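/- arXiv:1906.04529 — 4 statements merged into one kernel-verified Lean document; each statement's English description precedes it below -/
import Mathlib

section
/- For all 0 ≤ t ≤ σ², P( σ̂²_mean − σ² ≤ −t ) ≤ exp( − K_f² t² / (2V) ). -/
open MeasureTheory ProbabilityTheory Real
open scoped ENNReal


lemma aux_log_ineq {x : ℝ} (hx : 0 ≤ x) : x - x ^ 2 / 2 ≤ Real.log (1 + x) := by
  set g : ℝ → ℝ := fun y => Real.log (1 + y) - y + y ^ 2 / 2 with hg
  have hderiv : ∀ y ∈ Set.Ici (0 : ℝ), HasDerivAt g ((1 + y)⁻¹ - 1 + y) y := by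
    intro y hy
    have h1 : (0 : ℝ) < 1 + y := by
      have : (0:ℝ) ≤ y := hy
      linarith
    have hid : HasDerivAt (fun t : ℝ => 1 + t) 1 y := (hasDerivAt_id y).const_add 1
    have hlog : HasDerivAt (fun t => Real.log (1 + t)) ((1 + y)⁻¹) y := by
      simpa using hid.log h1.ne'
    have hpoly : HasDerivAt (fun t : ℝ => t - t ^ 2 / 2) (1 - y) y := by
      have h2 : HasDerivAt (fun t : ℝ => t ^ 2 / 2) y y := by
        simpa using (hasDerivAt_pow 2 y).div_const 2
      exact (hasDerivAt_id' y).sub h2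
    have this : HasDerivAt (fun t : ℝ => Real.log (1 + t) - (t - t ^ 2 / 2)) ((1 + y)⁻¹ - (1 - y)) y := hlog.sub hpoly
    convert this using 1
    · funext t; simp [hg]; ring
    · ring
  have hmono : MonotoneOn g (Set.Ici 0) := by
    apply monotoneOn_of_deriv_nonneg (convex_Ici 0)
    · exact fun y hy => (hderiv y hy).continuousAt.continuousWithinAt
    · intro y hy
      rw [interior_Ici] at hy
      exact (hderiv y (Set.mem_Ici.mpr (le_of_lt hy))).differentiableAt.differentiableWithinAt
    · intro y hy
      rw [interior_Ici] at hy
      rw [(hderiv y (Set.mem_Ici.mpr (le_of_lt hy))).deriv]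
      have h1 : (0 : ℝ) < 1 + y := by linarith [show (0:ℝ) < y from hy]
      have heq : (1 + y)⁻¹ - 1 + y = y ^ 2 / (1 + y) := by field_simp; ring
      rw [heq]; positivity
  have h0 : g 0 = 0 := by simp [hg]
  have := hmono Set.self_mem_Ici hx hx
  rw [h0] at this
  simp only [hg] at this
  linarith


lemma gammaPDF_mul_exp {a r u : ℝ} (ha : 0 < a) (hr : 0 < r) (hru : u < r) (x : ℝ) :
    gammaPDF a r x * ENNReal.ofReal (Real.exp (u * x))
      = ENNReal.ofReal ((r / (r - u)) ^ a) * gammaPDF a (r - u) x := by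
  rcases lt_or_ge x 0 with hx | hx
  · rw [gammaPDF_of_neg hx, gammaPDF_of_neg hx, zero_mul, mul_zero]
  · have hru' : (0:ℝ) < r - u := by linarith
    rw [gammaPDF_of_nonneg hx, gammaPDF_of_nonneg hx,
      ← ENNReal.ofReal_mul (by positivity), ← ENNReal.ofReal_mul (by positivity)]
    congr 1
    have h1 : (r / (r - u)) ^ a * ((r - u) ^ a) = r ^ a := by
      rw [Real.div_rpow (by positivity) hru'.le]
      field_simp
    have h2 : Real.exp (-(r * x)) * Real.exp (u * x) = Real.exp (-((r - u) * x)) := by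
      rw [← Real.exp_add]; ring_nf
    calc r ^ a / Real.Gamma a * x ^ (a - 1) * Real.exp (-(r * x)) * Real.exp (u * x)
        = (r ^ a) * (1 / Real.Gamma a * x ^ (a - 1) * Real.exp (-((r-u) * x))) := by
          rw [← h2]; ring
      _ = (r / (r - u)) ^ a * ((r - u) ^ a / Real.Gamma a * x ^ (a - 1)
            * Real.exp (-((r - u) * x))) := by rw [← h1]; ring

lemma lintegral_exp_gammaMeasure {a r u : ℝ} (ha : 0 < a) (hr : 0 < r) (hu : u < r) :
    ∫⁻ x, ENNReal.ofReal (Real.exp (u * x)) ∂(gammaMeasure a r)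
      = ENNReal.ofReal ((r / (r - u)) ^ a) := by
  have hm : Measurable (gammaPDF a r) := (measurable_gammaPDFReal a r).ennreal_ofReal
  have hm2 : Measurable fun x : ℝ => ENNReal.ofReal (Real.exp (u * x)) := by fun_prop
  rw [gammaMeasure, lintegral_withDensity_eq_lintegral_mul _ hm hm2]
  simp only [Pi.mul_apply]
  calc ∫⁻ x, gammaPDF a r x * ENNReal.ofReal (Real.exp (u * x))
      = ∫⁻ x, ENNReal.ofReal ((r / (r - u)) ^ a) * gammaPDF a (r - u) x := by
        simp_rw [gammaPDF_mul_exp ha hr hu]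
    _ = ENNReal.ofReal ((r / (r - u)) ^ a) * ∫⁻ x, gammaPDF a (r - u) x := by
        have hm3 : Measurable (gammaPDF a (r - u)) :=
          (measurable_gammaPDFReal a (r - u)).ennreal_ofReal
        rw [lintegral_const_mul _ hm3]
    _ = ENNReal.ofReal ((r / (r - u)) ^ a) := by
        rw [lintegral_gammaPDF_eq_one ha (by linarith), mul_one]

lemma integrable_exp_gammaMeasure {a r u : ℝ} (ha : 0 < a) (hr : 0 < r) (hu : u < r) :
    Integrable (fun x => Real.exp (u * x)) (gammaMeasure a r) := by
  have hm2 : Measurable fun x : ℝ => Real.exp (u * x) := by fun_prop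
  refine ⟨hm2.aestronglyMeasurable, ?_⟩
  rw [hasFiniteIntegral_iff_ofReal (ae_of_all _ fun x => (Real.exp_pos _).le)]
  rw [lintegral_exp_gammaMeasure ha hr hu]
  exact ENNReal.ofReal_lt_top

lemma integral_exp_gammaMeasure {a r u : ℝ} (ha : 0 < a) (hr : 0 < r) (hu : u < r) :
    ∫ x, Real.exp (u * x) ∂(gammaMeasure a r) = (r / (r - u)) ^ a := by
  have hm2 : Measurable fun x : ℝ => Real.exp (u * x) := by fun_prop
  rw [integral_eq_lintegral_of_nonneg_ae (ae_of_all _ fun x => (Real.exp_pos _).le)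
    hm2.aestronglyMeasurable,
    lintegral_exp_gammaMeasure ha hr hu, ENNReal.toReal_ofReal]
  have hru' : (0:ℝ) < r - u := by linarith
  positivity

/-- Let `(c k)_{k < K}` (`K = K_f ≥ 1`) be independent random variables with
`c k` distributed as `(σ²/n_k)·Γ_{n_k}` where `Γ_{n_k} ~ χ²(n_k)` (Gamma with shape `n_k/2` and
rate `1/2`), and let `σ̂²_mean = (1/K) Σ_k c_k` and `V = 2σ⁴ Σ_k 1/n_k`.  Then for all
`0 ≤ t ≤ σ²`, `P(σ̂²_mean − σ² ≤ −t) ≤ exp(− K² t² / (2V))`. -/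
theorem stmt4
    {Ω : Type*} [MeasureSpace Ω] [IsProbabilityMeasure (ℙ : Measure Ω)]
    {K : ℕ} (hK : 1 ≤ K) {σ : ℝ} (hσ : 0 < σ)
    (nk : Fin K → ℕ) (hnk : ∀ k, 1 ≤ nk k)
    (c : Fin K → Ω → ℝ) (hcmeas : ∀ k, Measurable (c k))
    (hlaw : ∀ k, Measure.map (c k) ℙ
      = Measure.map (fun x => σ ^ 2 / (nk k : ℝ) * x) (gammaMeasure ((nk k : ℝ) / 2) (1 / 2)))
    (hindep : iIndepFun c ℙ)
    (t : ℝ) (ht : 0 ≤ t) (ht' : t ≤ σ ^ 2) :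
    ℙ {ω | (1 / (K : ℝ)) * ∑ k, c k ω - σ ^ 2 ≤ -t}
      ≤ ENNReal.ofReal (Real.exp (- ((K : ℝ) ^ 2 * t ^ 2 /
          (2 * (2 * σ ^ 4 * ∑ k, 1 / (nk k : ℝ)))))) := by
  have hK0 : (0:ℝ) < K := by exact_mod_cast hK
  haveI : Nonempty (Fin K) := ⟨⟨0, hK⟩⟩
  have hn0 : ∀ k, (0:ℝ) < nk k := fun k => by exact_mod_cast hnk k
  set S := ∑ k, 1 / (nk k : ℝ) with hS_def
  have hS : 0 < S := Finset.sum_pos (fun k _ => by have := hn0 k; positivity)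
    Finset.univ_nonempty
  set V := 2 * σ ^ 4 * S with hV_def
  have hV : 0 < V := by positivity
  set lam := (K:ℝ) * t / V with hlam_def
  have hlam : 0 ≤ lam := by positivity
  -- the exponential parameter
  have hu : ∀ k, (-lam) * (σ ^ 2 / (nk k : ℝ)) < 1/2 := by
    intro k
    have : (-lam) * (σ ^ 2 / (nk k : ℝ)) ≤ 0 := by
      apply mul_nonpos_of_nonpos_of_nonneg (by linarith) (by (have := hn0 k; positivity))
    linarith
  have ha : ∀ k, (0:ℝ) < (nk k : ℝ) / 2 := fun k => by (have := hn0 k; positivity)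
  have hmeasexp : Measurable fun x : ℝ => Real.exp ((-lam) * x) := by fun_prop
  -- mgf of each c k
  have hmgf : ∀ k, mgf (c k) ℙ (-lam)
      = ((1/2) / (1/2 - (-lam) * (σ ^ 2 / (nk k : ℝ)))) ^ ((nk k : ℝ) / 2) := by
    intro k
    have h1 : mgf (c k) ℙ (-lam) = ∫ ω, Real.exp ((-lam) * c k ω) ∂ℙ := rfl
    rw [h1, ← integral_map (hcmeas k).aemeasurable hmeasexp.aestronglyMeasurable, hlaw k,
      integral_map (by fun_prop) hmeasexp.aestronglyMeasurable]
    have h2 : ∀ x : ℝ, Real.exp ((-lam) * (σ ^ 2 / (nk k : ℝ) * x))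
        = Real.exp (((-lam) * (σ ^ 2 / (nk k : ℝ))) * x) := fun x => by ring_nf
    simp_rw [h2]
    exact integral_exp_gammaMeasure (ha k) one_half_pos (hu k)
  -- integrability
  have hint : ∀ k, Integrable (fun ω => Real.exp ((-lam) * c k ω)) ℙ := by
    intro k
    have h1 := integrable_exp_gammaMeasure (ha k) one_half_pos (hu k)
    have h2 : Integrable (fun x => Real.exp ((-lam) * x))
        (Measure.map (fun x => σ ^ 2 / (nk k : ℝ) * x) (gammaMeasure ((nk k : ℝ) / 2) (1/2))) := by
      rw [integrable_map_measure hmeasexp.aestronglyMeasurable (by fun_prop)]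
      apply h1.congr
      filter_upwards with x
      simp only [Function.comp_apply]
      ring_nf
    rw [← hlaw k] at h2
    have := (integrable_map_measure hmeasexp.aestronglyMeasurable (hcmeas k).aemeasurable).mp h2
    exact this
  have hintsum : Integrable (fun ω => Real.exp ((-lam) * (∑ k, c k) ω)) ℙ :=
    hindep.integrable_exp_mul_sum hcmeas (fun i _ => hint i)
  have hchern := measure_le_le_exp_mul_mgf (μ := ℙ) (X := ∑ k, c k)
    ((K:ℝ) * (σ ^ 2 - t)) (neg_nonpos_of_nonneg hlam) hintsum
  have hsum_mgf : mgf (∑ k, c k) ℙ (-lam) = ∏ k, mgf (c k) ℙ (-lam) :=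
    hindep.mgf_sum hcmeas Finset.univ
  -- set equality
  have hset : {ω : Ω | (1 / (K : ℝ)) * ∑ k, c k ω - σ ^ 2 ≤ -t}
      = {ω : Ω | (∑ k, c k) ω ≤ (K:ℝ) * (σ ^ 2 - t)} := by
    ext ω
    simp only [Set.mem_setOf_eq, Finset.sum_apply]
    have hKne : (K:ℝ) ≠ 0 := hK0.ne'
    constructor <;> intro h
    · have h2 : (1/(K:ℝ)) * ∑ k, c k ω ≤ σ ^ 2 - t := by linarith
      calc ∑ k, c k ω = (K:ℝ) * ((1/(K:ℝ)) * ∑ k, c k ω) := by field_simp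
        _ ≤ (K:ℝ) * (σ ^ 2 - t) := mul_le_mul_of_nonneg_left h2 hK0.le
    · have h2 : (1/(K:ℝ)) * ∑ k, c k ω ≤ (1/(K:ℝ)) * ((K:ℝ) * (σ ^ 2 - t)) :=
        mul_le_mul_of_nonneg_left h (by positivity)
      have h3 : (1/(K:ℝ)) * ((K:ℝ) * (σ ^ 2 - t)) = σ ^ 2 - t := by field_simp
      linarith
  -- positivity of mgf bases
  have hb : ∀ k, (0:ℝ) < (1/2) / (1/2 - (-lam) * (σ ^ 2 / (nk k : ℝ))) :=
    fun k => div_pos (by norm_num) (by linarith [hu k])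
  -- the real-valued bound
  have hreal : Real.exp (-(-lam) * ((K:ℝ) * (σ ^ 2 - t))) * ∏ k, mgf (c k) ℙ (-lam)
      ≤ Real.exp (-((K : ℝ) ^ 2 * t ^ 2 / (2 * V))) := by
    have hprod : ∏ k, mgf (c k) ℙ (-lam)
        = Real.exp (∑ k, Real.log ((1/2) / (1/2 - (-lam) * (σ ^ 2 / (nk k : ℝ))))
            * ((nk k : ℝ) / 2)) := by
      rw [Real.exp_sum]
      refine Finset.prod_congr rfl fun k _ => ?_
      rw [hmgf k, Real.rpow_def_of_pos (hb k)]
    rw [hprod, ← Real.exp_add, Real.exp_le_exp]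
    -- per-term bound
    have hterm : ∀ k, Real.log ((1/2) / (1/2 - (-lam) * (σ ^ 2 / (nk k : ℝ))))
        * ((nk k : ℝ) / 2) ≤ -(lam * σ ^ 2) + lam ^ 2 * σ ^ 4 * (1 / (nk k : ℝ)) := by
      intro k
      have hn := hn0 k
      set x := 2 * lam * σ ^ 2 / (nk k : ℝ) with hx_def
      have hx : 0 ≤ x := by positivity
      have hd : (0:ℝ) < 1 + x := by linarith
      have hne : (nk k : ℝ) ≠ 0 := hn.ne'
      have hbase : (1:ℝ)/2 - (-lam) * (σ ^ 2 / (nk k : ℝ)) = (1 + x)/2 := by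
        rw [hx_def]; field_simp; ring
      have hbase2 : (1:ℝ)/2 / ((1 + x)/2) = (1 + x)⁻¹ := by
        field_simp
      rw [hbase, hbase2, Real.log_inv]
      have hlog := aux_log_ineq hx
      have h1 : -Real.log (1 + x) ≤ -(x - x ^ 2 / 2) := by linarith
      calc -Real.log (1 + x) * ((nk k : ℝ) / 2)
          ≤ (-(x - x ^ 2 / 2)) * ((nk k : ℝ) / 2) :=
            mul_le_mul_of_nonneg_right h1 (by positivity)
        _ = -(lam * σ ^ 2) + lam ^ 2 * σ ^ 4 * (1 / (nk k : ℝ)) := by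
            rw [hx_def]; field_simp; ring
    have hsum : ∑ k, Real.log ((1/2) / (1/2 - (-lam) * (σ ^ 2 / (nk k : ℝ))))
        * ((nk k : ℝ) / 2) ≤ -(lam * σ ^ 2) * K + lam ^ 2 * σ ^ 4 * S := by
      calc _ ≤ ∑ k : Fin K, (-(lam * σ ^ 2) + lam ^ 2 * σ ^ 4 * (1 / (nk k : ℝ))) :=
            Finset.sum_le_sum fun k _ => hterm k
        _ = -(lam * σ ^ 2) * K + lam ^ 2 * σ ^ 4 * S := by
            rw [Finset.sum_add_distrib, Finset.sum_const, ← Finset.mul_sum, hS_def]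
            simp [Finset.card_univ]
            ring
    have hkey : -(-lam) * ((K:ℝ) * (σ ^ 2 - t)) + (-(lam * σ ^ 2) * K + lam ^ 2 * σ ^ 4 * S)
        = -((K : ℝ) ^ 2 * t ^ 2 / (2 * V)) := by
      rw [hlam_def, hV_def]
      field_simp
      ring
    linarith
  rw [hset]
  calc ℙ {ω : Ω | (∑ k, c k) ω ≤ (K:ℝ) * (σ ^ 2 - t)}
      = ENNReal.ofReal ((ℙ {ω : Ω | (∑ k, c k) ω ≤ (K:ℝ) * (σ ^ 2 - t)}).toReal) :=
        (ENNReal.ofReal_toReal (measure_ne_top _ _)).symm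
    _ ≤ ENNReal.ofReal (Real.exp (-((K : ℝ) ^ 2 * t ^ 2 / (2 * V)))) :=
        ENNReal.ofReal_le_ofReal (le_trans hchern (by rw [hsum_mgf]; exact hreal))
end

section
/- For all t ≥ 0 such that p⁺(t) ≤ 1/2, P( σ̂²_med ≥ β⁻¹σ² + 2σ²β⁻¹ t ) ≤ exp( (K_f/2) · ln( 4 p⁺(t)(1 − p⁺(t)) ) ), where p⁺(t) = P( Γ_{n_∞} ≥ n_∞ + 2 n_∞ t ) and Γ_{n_∞} ~ χ²(n_∞). -/
open MeasureTheory ProbabilityTheory Real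
open scoped ENNReal

/-- The sample median of `m` real values: the middle order statistic if `m` is odd,
the average of the two middle order statistics if `m` is even. -/
noncomputable def sampleMedian {m : ℕ} (x : Fin m → ℝ) : ℝ :=
  let l := List.insertionSort (· ≤ ·) (List.ofFn x)
  if m % 2 = 1 then l.getD (m / 2) 0
  else (l.getD (m / 2 - 1) 0 + l.getD (m / 2) 0) / 2

lemma countP_ofFn' {K : ℕ} (v : Fin K → ℝ) (p : ℝ → Bool) :
    (List.ofFn v).countP p = (Finset.univ.filter (fun k => p (v k))).card := by
  rw [List.countP_eq_length_filter, Finset.card, Fin.univ_def, Finset.filter]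
  simp only [Finset.filter, Multiset.filter_coe]
  rw [List.ofFn_eq_map, List.filter_map]
  simp
  rfl

lemma median_count {K : ℕ} (hK : 1 ≤ K) (v : Fin K → ℝ) {a : ℝ}
    (h : a ≤ sampleMedian v) :
    (K - K / 2 : ℕ) ≤ (Finset.univ.filter (fun k => a ≤ v k)).card := by
  classical
  set l := List.insertionSort (· ≤ ·) (List.ofFn v) with hl
  have hlen : l.length = K := by simp [hl]
  have hsort : l.Pairwise (· ≤ ·) := List.pairwise_insertionSort _ _
  have hK0 : 0 < K := hK
  have hKK : K / 2 < K := Nat.div_lt_self hK0 one_lt_two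
  have key : a ≤ l.getD (K / 2) 0 := by
    unfold sampleMedian at h
    rw [← hl] at h
    by_cases hpar : K % 2 = 1
    · simpa only [if_pos hpar] using h
    · have h2 : 2 ≤ K := by omega
      have hle : l.getD (K / 2 - 1) 0 ≤ l.getD (K / 2) 0 := by
        rw [List.getD_eq_getElem l 0 (by omega : K/2-1 < l.length),
          List.getD_eq_getElem l 0 (by omega : K/2 < l.length)]
        exact hsort.rel_get_of_le (Fin.mk_le_mk.mpr (by omega))
      rw [if_neg hpar] at h
      linarith
  rw [List.getD_eq_getElem l 0 (by omega : K/2 < l.length)] at key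
  have hdrop : ∀ x ∈ l.drop (K / 2), a ≤ x := by
    intro x hx
    rw [List.mem_iff_getElem] at hx
    obtain ⟨i, hi, rfl⟩ := hx
    rw [List.getElem_drop]
    refine key.trans ?_
    have : K / 2 + i < l.length := by
      simp only [List.length_drop] at hi; omega
    exact hsort.rel_get_of_le (a := ⟨K/2, by omega⟩) (b := ⟨K/2+i, this⟩) (by simp)
  have hcount : (K - K / 2 : ℕ) ≤ l.countP (fun x => decide (a ≤ x)) := by
    have := List.countP_eq_length (p := fun x => decide (a ≤ x)) (l := l.drop (K/2)) |>.mpr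
      (by intro x hx; simpa using hdrop x hx)
    calc (K - K/2 : ℕ) = (l.drop (K/2)).length := by rw [List.length_drop, hlen]
    _ = (l.drop (K/2)).countP (fun x => decide (a ≤ x)) := this.symm
    _ ≤ l.countP _ := by
        conv_rhs => rw [← List.take_append_drop (K/2) l]
        rw [List.countP_append]; omega
  have hperm : l.countP (fun x => decide (a ≤ x)) = (List.ofFn v).countP (fun x => decide (a ≤ x)) :=
    (List.perm_insertionSort _ _).countP_eq _
  rw [hperm, countP_ofFn'] at hcount
  simpa using hcount

lemma gamma_tail_mono {a b r : ℝ} (ha : 0 < a) (hab : a ≤ b) (hr : 0 < r) (s : ℝ) :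
    gammaMeasure a r {x | s ≤ x} ≤ gammaMeasure b r {x | s ≤ x} := by
  rcases eq_or_lt_of_le hab with rfl | hab'
  · exact le_refl _
  have hb : 0 < b := ha.trans hab'
  set d : ℝ := b - a with hd
  have hd0 : 0 < d := by simp [hd]; linarith
  have hGa : 0 < Gamma a := Gamma_pos_of_pos ha
  have hGb : 0 < Gamma b := Gamma_pos_of_pos hb
  have hra : 0 < r ^ a := rpow_pos_of_pos hr a
  have hrb : 0 < r ^ b := rpow_pos_of_pos hr b
  set E : ℝ := (r ^ a / Gamma a) / (r ^ b / Gamma b) with hE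
  have hE0 : 0 < E := by positivity
  set x0 : ℝ := E ^ (1 / d) with hx0
  have hx00 : 0 < x0 := rpow_pos_of_pos hE0 _
  have hx0d : x0 ^ d = E := by
    rw [hx0, ← Real.rpow_mul hE0.le, one_div, inv_mul_cancel₀ hd0.ne', Real.rpow_one]
  have hfactor : ∀ x : ℝ, 0 < x →
      gammaPDFReal b r x = gammaPDFReal a r x * (x ^ d / E) := by
    intro x hx
    have hx1 : x ^ (b - 1) = x ^ (a - 1) * x ^ d := by
      rw [← Real.rpow_add hx]; congr 1; rw [hd]; ring
    rw [gammaPDFReal, gammaPDFReal, if_pos hx.le, if_pos hx.le, hx1, hE]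
    field_simp
  have hmono_ge : ∀ x : ℝ, x0 ≤ x →
      gammaPDF a r x ≤ gammaPDF b r x := by
    intro x hx
    have hxpos : 0 < x := hx00.trans_le hx
    rw [gammaPDF, gammaPDF, hfactor x hxpos]
    refine ENNReal.ofReal_le_ofReal ?_
    have h1 : (1:ℝ) ≤ x ^ d / E := by
      rw [le_div_iff₀ hE0, one_mul, ← hx0d]
      exact Real.rpow_le_rpow hx00.le hx hd0.le
    exact le_mul_of_one_le_right (gammaPDFReal_nonneg ha hr x) h1
  have hmono_le : ∀ x : ℝ, x ≠ 0 → x ≤ x0 →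
      gammaPDF b r x ≤ gammaPDF a r x := by
    intro x hne hx
    rcases lt_or_gt_of_ne hne with hneg | hpos
    · rw [gammaPDF_of_neg hneg, gammaPDF_of_neg hneg]
    · rw [gammaPDF, gammaPDF, hfactor x hpos]
      refine ENNReal.ofReal_le_ofReal ?_
      have h1 : x ^ d / E ≤ 1 := by
        rw [div_le_one hE0, ← hx0d]
        exact Real.rpow_le_rpow hpos.le hx hd0.le
      exact mul_le_of_le_one_right (gammaPDFReal_nonneg ha hr x) h1
  have hset : {x : ℝ | s ≤ x} = Set.Ici s := rfl
  have hPa : IsProbabilityMeasure (gammaMeasure a r) := isProbabilityMeasure_gammaMeasure ha hr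
  have hPb : IsProbabilityMeasure (gammaMeasure b r) := isProbabilityMeasure_gammaMeasure hb hr
  rw [hset]
  by_cases hs : x0 ≤ s
  · rw [gammaMeasure, gammaMeasure, withDensity_apply _ measurableSet_Ici,
      withDensity_apply _ measurableSet_Ici]
    refine setLIntegral_mono ((measurable_gammaPDFReal b r).ennreal_ofReal) ?_
    intro x hx
    exact hmono_ge x (hs.trans hx)
  · push_neg at hs
    have hcmp : gammaMeasure b r (Set.Iio s) ≤ gammaMeasure a r (Set.Iio s) := by
      rw [gammaMeasure, gammaMeasure, withDensity_apply _ measurableSet_Iio,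
        withDensity_apply _ measurableSet_Iio]
      refine lintegral_mono_ae ?_
      have h0 : ∀ᵐ x : ℝ ∂(volume.restrict (Set.Iio s)), x ≠ 0 := by
        refine ae_restrict_of_ae ?_
        refine (MeasureTheory.ae_iff).mpr ?_
        simpa using measure_singleton (0:ℝ)
      have h1 : ∀ᵐ x : ℝ ∂(volume.restrict (Set.Iio s)), x ∈ Set.Iio s :=
        ae_restrict_mem measurableSet_Iio
      filter_upwards [h0, h1] with x hne hxs
      exact hmono_le x hne ((le_of_lt hxs).trans hs.le)
    have ha' : gammaMeasure a r (Set.Ici s) = 1 - gammaMeasure a r (Set.Iio s) := by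
      rw [← Set.compl_Iio]
      rw [prob_compl_eq_one_sub measurableSet_Iio]
    have hb' : gammaMeasure b r (Set.Ici s) = 1 - gammaMeasure b r (Set.Iio s) := by
      rw [← Set.compl_Iio]
      rw [prob_compl_eq_one_sub measurableSet_Iio]
    rw [ha', hb']
    exact tsub_le_tsub_left hcmp 1

/-- Let `(c k)_{k < K}` (`K = K_f ≥ 1`) be independent random variables with
`c k ~ (σ²/n_k)·χ²(n_k)`, `n₀ = min_k n_k`, `n_∞ = max_k n_k`, `β = n₀/n_∞`, and let
`σ̂²_med` be the sample median of the `c k`.  For `t ≥ 0` with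
`p⁺(t) = P(Γ_{n_∞} ≥ n_∞ + 2 n_∞ t) ≤ 1/2` (`Γ_{n_∞} ~ χ²(n_∞)`),
`P(σ̂²_med ≥ β⁻¹σ² + 2σ²β⁻¹t) ≤ exp((K/2)·ln(4 p⁺(t)(1 − p⁺(t))))`. -/
theorem stmt5
    {Ω : Type*} [MeasureSpace Ω] [IsProbabilityMeasure (ℙ : Measure Ω)]
    {K : ℕ} (hK : 1 ≤ K) {σ : ℝ} (hσ : 0 < σ)
    (nk : Fin K → ℕ) (hnk : ∀ k, 1 ≤ nk k)
    (c : Fin K → Ω → ℝ) (hcmeas : ∀ k, Measurable (c k))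
    (hlaw : ∀ k, Measure.map (c k) ℙ
      = Measure.map (fun x => σ ^ 2 / (nk k : ℝ) * x) (gammaMeasure ((nk k : ℝ) / 2) (1 / 2)))
    (hindep : iIndepFun c ℙ)
    (n0 ninf : ℕ) (hn0 : IsLeast (Set.range nk) n0) (hninf : IsGreatest (Set.range nk) ninf)
    (t : ℝ) (ht : 0 ≤ t)
    (p : ℝ)
    (hp : p = (gammaMeasure ((ninf : ℝ) / 2) (1 / 2)
        {x | (ninf : ℝ) + 2 * (ninf : ℝ) * t ≤ x}).toReal)
    (hphalf : p ≤ 1 / 2) :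
    ℙ {ω | sampleMedian (fun k => c k ω)
          ≥ ((n0 : ℝ) / (ninf : ℝ))⁻¹ * σ ^ 2 + 2 * σ ^ 2 * ((n0 : ℝ) / (ninf : ℝ))⁻¹ * t}
      ≤ ENNReal.ofReal (Real.exp ((K : ℝ) / 2 * Real.log (4 * p * (1 - p)))) := by
  classical
  obtain ⟨⟨k0, hk0⟩, hn0ub⟩ := hn0
  obtain ⟨⟨kinf, hkinf⟩, hninfub⟩ := hninf
  have hn01 : 1 ≤ n0 := hk0 ▸ hnk k0
  have hninf1 : 1 ≤ ninf := hkinf ▸ hnk kinf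
  have hn0inf : n0 ≤ ninf := hkinf ▸ hn0ub ⟨kinf, rfl⟩
  have hn0R : (0:ℝ) < n0 := by exact_mod_cast hn01
  have hninfR : (0:ℝ) < ninf := by exact_mod_cast hninf1
  set a : ℝ := ((n0 : ℝ) / (ninf : ℝ))⁻¹ * σ ^ 2 + 2 * σ ^ 2 * ((n0 : ℝ) / (ninf : ℝ))⁻¹ * t
    with ha_def
  set s0 : ℝ := (ninf : ℝ) + 2 * (ninf : ℝ) * t with hs0
  have hp0 : 0 ≤ p := hp ▸ ENNReal.toReal_nonneg
  -- per-coordinate tail bound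
  have hq : ∀ k, ℙ {ω | a ≤ c k ω} ≤ ENNReal.ofReal p := by
    intro k
    have hnkR : (0:ℝ) < nk k := by exact_mod_cast hnk k
    have hC : (0:ℝ) < σ ^ 2 / (nk k : ℝ) := by positivity
    have h1 : ℙ {ω | a ≤ c k ω} = Measure.map (c k) ℙ (Set.Ici a) := by
      rw [Measure.map_apply (hcmeas k) measurableSet_Ici]; rfl
    have h2 : (fun x : ℝ => σ ^ 2 / (nk k : ℝ) * x) ⁻¹' Set.Ici a
        = Set.Ici (a / (σ ^ 2 / (nk k : ℝ))) := by
      ext x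
      simp only [Set.mem_preimage, Set.mem_Ici]
      exact (div_le_iff₀' hC).symm
    have h3 : ℙ {ω | a ≤ c k ω}
        = gammaMeasure ((nk k : ℝ) / 2) (1 / 2) (Set.Ici (a / (σ ^ 2 / (nk k : ℝ)))) := by
      rw [h1, hlaw k, Measure.map_apply (measurable_id'.const_mul _) measurableSet_Ici, h2]
    have hs0le : s0 ≤ a / (σ ^ 2 / (nk k : ℝ)) := by
      rw [ha_def, hs0]
      rw [div_div_eq_mul_div, inv_div]
      have hnn0 : (n0:ℝ) ≤ (nk k : ℝ) := by exact_mod_cast hn0ub ⟨k, rfl⟩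
      have hσ2 : (0:ℝ) < σ ^ 2 := by positivity
      rw [le_div_iff₀ hσ2, ← sub_nonneg]
      have e1 : (((ninf:ℝ) / n0 * σ ^ 2 + 2 * σ ^ 2 * ((ninf:ℝ) / n0) * t) * (nk k:ℝ)
          - ((ninf:ℝ) + 2 * ninf * t) * σ ^ 2)
          = σ ^ 2 * (ninf / n0) * (1 + 2*t) * ((nk k:ℝ) - n0) := by
        field_simp
      rw [e1]
      have h2t : (0:ℝ) ≤ 1 + 2*t := by linarith
      exact mul_nonneg (mul_nonneg (mul_nonneg hσ2.le (by positivity)) h2t) (by linarith)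
    have h4 : gammaMeasure ((nk k : ℝ) / 2) (1 / 2) (Set.Ici (a / (σ ^ 2 / (nk k : ℝ))))
        ≤ gammaMeasure ((nk k : ℝ) / 2) (1 / 2) {x | s0 ≤ x} := by
      refine measure_mono ?_
      intro x hx
      exact hs0le.trans hx
    have h5 : gammaMeasure ((nk k : ℝ) / 2) (1 / 2) {x | s0 ≤ x}
        ≤ gammaMeasure ((ninf : ℝ) / 2) (1 / 2) {x | s0 ≤ x} := by
      refine gamma_tail_mono (by positivity) ?_ (by norm_num) s0
      have : (nk k : ℝ) ≤ (ninf : ℝ) := by exact_mod_cast hninfub ⟨k, rfl⟩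
      linarith
    have hfin : IsProbabilityMeasure (gammaMeasure ((ninf : ℝ) / 2) (1 / 2)) :=
      isProbabilityMeasure_gammaMeasure (by positivity) (by norm_num)
    have h6 : gammaMeasure ((ninf : ℝ) / 2) (1 / 2) {x | s0 ≤ x} = ENNReal.ofReal p := by
      rw [hp, ENNReal.ofReal_toReal (measure_ne_top _ _)]
    rw [h3]
    exact (h4.trans h5).trans_eq h6
  -- case p = 0
  rcases eq_or_lt_of_le hp0 with hpz | hppos
  · have : 4 * p * (1 - p) = 0 := by rw [← hpz]; ring
    rw [this, Real.log_zero, mul_zero, Real.exp_zero, ENNReal.ofReal_one]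
    exact prob_le_one
  -- main case
  set q : ℝ := 1 - p with hqdef
  have hq2 : p ≤ q := by rw [hqdef]; linarith
  have hqpos : 0 < q := lt_of_lt_of_le hppos hq2
  set lam : ℝ := Real.log (q / p) with hlam
  have hlam0 : 0 ≤ lam := Real.log_nonneg ((one_le_div hppos).mpr hq2)
  have helam : Real.exp lam = q / p := Real.exp_log (by positivity)
  set X : Fin K → Ω → ℝ := fun k ω => if a ≤ c k ω then 1 else 0 with hXdef
  have hEmeas : ∀ k, MeasurableSet {ω | a ≤ c k ω} :=
    fun k => measurableSet_le measurable_const (hcmeas k)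
  have hXmeas : ∀ k, Measurable (X k) :=
    fun k => Measurable.ite (hEmeas k) measurable_const measurable_const
  have hXindep : iIndepFun X ℙ := by
    have hg : Measurable (fun x : ℝ => if a ≤ x then (1:ℝ) else 0) :=
      Measurable.ite measurableSet_Ici measurable_const measurable_const
    exact hindep.comp (fun _ => fun x => if a ≤ x then (1:ℝ) else 0) (fun _ => hg)
  set m : ℕ := K - K / 2 with hm
  set S : Ω → ℝ := ∑ i ∈ Finset.univ, X i with hS
  have hSapp : ∀ ω, S ω = ∑ i, X i ω := by
    intro ω; rw [hS]; simp
  have hSmeas : Measurable S := by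
    have h' : S = fun ω => ∑ i, X i ω := funext hSapp
    rw [h']; exact Finset.measurable_sum _ (fun i _ => hXmeas i)
  have hSbound : ∀ ω, S ω ≤ K := by
    intro ω
    rw [hSapp]
    calc ∑ i, X i ω ≤ ∑ _i : Fin K, (1:ℝ) := by
          refine Finset.sum_le_sum (fun i _ => ?_)
          rw [hXdef]; dsimp only; split_ifs <;> norm_num
    _ = K := by simp
  have hsub : {ω | sampleMedian (fun k => c k ω) ≥ a} ⊆ {ω | (m:ℝ) ≤ S ω} := by
    intro ω hω
    have hcard := median_count hK (fun k => c k ω) hω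
    have : S ω = ((Finset.univ.filter (fun k => a ≤ c k ω)).card : ℝ) := by
      rw [hSapp, hXdef]
      rw [Finset.sum_boole]
    rw [Set.mem_setOf_eq, this]
    exact_mod_cast hcard
  have hInt : Integrable (fun ω => Real.exp (lam * S ω)) ℙ := by
    refine (integrable_const (Real.exp (lam * K))).mono'
      ((hSmeas.const_mul lam).exp.aestronglyMeasurable) (ae_of_all _ (fun ω => ?_))
    rw [Real.norm_of_nonneg (Real.exp_pos _).le]
    exact Real.exp_le_exp.mpr (mul_le_mul_of_nonneg_left (hSbound ω) hlam0)
  have hch := measure_ge_le_exp_mul_mgf (μ := ℙ) (X := S) (ε := (m:ℝ)) hlam0 hInt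
  -- mgf computation
  have hmgf : ∀ k, mgf (X k) ℙ lam = 1 + (ℙ {ω | a ≤ c k ω}).toReal * (Real.exp lam - 1) := by
    intro k
    have heq : (fun ω => Real.exp (lam * X k ω))
        = fun ω => Set.indicator {ω | a ≤ c k ω} (fun _ => Real.exp lam - 1) ω + 1 := by
      funext ω
      by_cases h : a ≤ c k ω
      · simp [hXdef, Set.indicator, h]
      · simp [hXdef, Set.indicator, h]
    rw [mgf, heq]
    rw [integral_add ((integrable_const _).indicator (hEmeas k)) (integrable_const 1)]
    rw [integral_indicator_const _ (hEmeas k)]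
    simp only [smul_eq_mul, integral_const, measureReal_def, measure_univ, ENNReal.toReal_one, one_smul]
    ring
  have hfac : mgf S ℙ lam = ∏ i, mgf (X i) ℙ lam := by
    rw [hS]
    exact hXindep.mgf_sum hXmeas Finset.univ
  have hqreal : ∀ k, (ℙ {ω | a ≤ c k ω}).toReal ≤ p := by
    intro k
    have := ENNReal.toReal_mono ENNReal.ofReal_ne_top (hq k)
    rwa [ENNReal.toReal_ofReal hp0] at this
  have hexp1 : (0:ℝ) ≤ Real.exp lam - 1 := by
    have := Real.one_le_exp hlam0
    linarith
  have hfactor_le : ∀ k, mgf (X k) ℙ lam ≤ 2 * q := by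
    intro k
    rw [hmgf k]
    have h1 : (ℙ {ω | a ≤ c k ω}).toReal * (Real.exp lam - 1) ≤ p * (Real.exp lam - 1) :=
      mul_le_mul_of_nonneg_right (hqreal k) hexp1
    have h2 : 1 + p * (Real.exp lam - 1) = 2 * q := by
      rw [helam, hqdef]
      field_simp
      ring
    linarith
  have hfactor_nn : ∀ k, 0 ≤ mgf (X k) ℙ lam := by
    intro k
    rw [hmgf k]
    have : 0 ≤ (ℙ {ω | a ≤ c k ω}).toReal * (Real.exp lam - 1) :=
      mul_nonneg ENNReal.toReal_nonneg hexp1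
    linarith
  have hprod : mgf S ℙ lam ≤ (2 * q) ^ K := by
    rw [hfac]
    calc ∏ i, mgf (X i) ℙ lam ≤ ∏ _i : Fin K, (2 * q) :=
          Finset.prod_le_prod (fun i _ => hfactor_nn i) (fun i _ => hfactor_le i)
    _ = (2 * q) ^ K := by simp
  -- numeric inequality
  have hmK : (K:ℝ) / 2 ≤ (m:ℝ) := by
    rw [hm]
    rw [Nat.cast_sub (Nat.div_le_self K 2)]
    have := Nat.cast_div_le (α := ℝ) (m := K) (n := 2)
    push_cast at this ⊢
    linarith
  have hnum : Real.exp (-lam * m) * (2 * q) ^ K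
      ≤ Real.exp ((K : ℝ) / 2 * Real.log (4 * p * (1 - p))) := by
    have h2q : (0:ℝ) < 2 * q := by linarith
    have hpow : (2 * q) ^ K = Real.exp ((K:ℝ) * Real.log (2 * q)) := by
      rw [Real.exp_nat_mul, Real.exp_log h2q]
    rw [hpow, ← Real.exp_add]
    refine Real.exp_le_exp.mpr ?_
    have hlog1 : Real.log (2 * q) = Real.log 2 + Real.log q :=
      Real.log_mul (by norm_num) hqpos.ne'
    have hlog2 : Real.log (4 * p * (1 - p)) = 2 * Real.log 2 + Real.log p + Real.log q := by
      rw [← hqdef]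
      rw [Real.log_mul (by positivity) hqpos.ne', Real.log_mul (by norm_num) hppos.ne']
      have : Real.log 4 = 2 * Real.log 2 := by
        rw [show (4:ℝ) = 2 ^ 2 by norm_num, Real.log_pow]
        norm_num
      rw [this]
    have hlamval : lam = Real.log q - Real.log p := Real.log_div hqpos.ne' hppos.ne'
    rw [hlog1, hlog2, hlamval]
    have hLL : 0 ≤ Real.log q - Real.log p := by
      have := Real.log_le_log hppos hq2
      linarith
    nlinarith [mul_nonneg hLL (by linarith : (0:ℝ) ≤ (m:ℝ) - (K:ℝ)/2)]
  -- assemble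
  calc ℙ {ω | sampleMedian (fun k => c k ω) ≥ a}
      ≤ ℙ {ω | (m:ℝ) ≤ S ω} := measure_mono hsub
    _ = ENNReal.ofReal ((ℙ {ω | (m:ℝ) ≤ S ω}).toReal) :=
        (ENNReal.ofReal_toReal (measure_ne_top _ _)).symm
    _ ≤ ENNReal.ofReal (Real.exp ((K : ℝ) / 2 * Real.log (4 * p * (1 - p)))) := by
        refine ENNReal.ofReal_le_ofReal ?_
        refine hch.trans ?_
        calc Real.exp (-lam * m) * mgf S ℙ lam ≤ Real.exp (-lam * m) * (2*q)^K := by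
              exact mul_le_mul_of_nonneg_left hprod (Real.exp_pos _).le
        _ ≤ _ := hnum
end

section
/- For all 0 ≤ t ≤ 1 such that p⁻(t) ≤ 1/2, P( σ̂²_med ≤ βσ² − σ²β t ) ≤ exp( (K_f/2) · ln( 4 p⁻(t)(1 − p⁻(t)) ) ), where p⁻(t) = P( Γ_{n_0} ≤ n_0 − n_0 t ) and Γ_{n_0} ~ χ²(n_0). -/
open MeasureTheory ProbabilityTheory Real
open scoped ENNReal

open Set in
lemma my_gamma_cdf_anti {a a' r : ℝ} (ha : 0 < a) (haa : a ≤ a') (hr : 0 < r) (s : ℝ) :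
    gammaMeasure a' r (Set.Iic s) ≤ gammaMeasure a r (Set.Iic s) := by
  rcases eq_or_lt_of_le haa with rfl | hlt
  · exact le_rfl
  have ha' : 0 < a' := ha.trans hlt
  set d : ℝ := a' - a with hd_def
  have hd : 0 < d := by simp [hd_def]; linarith
  have hGa : 0 < Gamma a := Gamma_pos_of_pos ha
  have hGa' : 0 < Gamma a' := Gamma_pos_of_pos ha'
  set C : ℝ := r ^ d * (Gamma a / Gamma a') with hC_def
  have hC : 0 < C := by
    have : (0:ℝ) < r ^ d := rpow_pos_of_pos hr d
    positivity
  set τ : ℝ := C ^ (-(1/d)) with hτ_def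
  have hτ : 0 < τ := rpow_pos_of_pos hC _
  have hτd : C * τ ^ d = 1 := by
    rw [hτ_def, ← Real.rpow_mul hC.le]
    have : -(1/d) * d = -1 := by field_simp
    rw [this, rpow_neg_one, mul_inv_cancel₀ hC.ne']
  have hkey : ∀ x : ℝ, 0 < x → gammaPDFReal a' r x = C * x ^ d * gammaPDFReal a r x := by
    intro x hx
    simp only [gammaPDFReal, if_pos hx.le]
    have h1 : r ^ a' = r ^ d * r ^ a := by
      rw [← rpow_add hr]; congr 1; rw [hd_def]; ring
    have h2 : x ^ (a' - 1) = x ^ d * x ^ (a - 1) := by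
      rw [← rpow_add hx]; congr 1; rw [hd_def]; ring
    rw [h1, h2, hC_def]
    field_simp
  have hcmp1 : ∀ x : ℝ, 0 < x → x ≤ τ → gammaPDFReal a' r x ≤ gammaPDFReal a r x := by
    intro x hx hxτ
    rw [hkey x hx]
    have hxd : x ^ d ≤ τ ^ d := rpow_le_rpow hx.le hxτ hd.le
    have : C * x ^ d ≤ 1 := by
      calc C * x ^ d ≤ C * τ ^ d := by nlinarith
      _ = 1 := hτd
    nlinarith [gammaPDFReal_nonneg ha hr x]
  have hcmp2 : ∀ x : ℝ, τ ≤ x → gammaPDFReal a r x ≤ gammaPDFReal a' r x := by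
    intro x hx
    have hx0 : 0 < x := hτ.trans_le hx
    rw [hkey x hx0]
    have hxd : τ ^ d ≤ x ^ d := rpow_le_rpow hτ.le hx hd.le
    have : 1 ≤ C * x ^ d := by
      calc (1:ℝ) = C * τ ^ d := hτd.symm
      _ ≤ C * x ^ d := by nlinarith
    nlinarith [gammaPDFReal_nonneg ha hr x]
  have h0ae : ∀ᵐ (x : ℝ) ∂(volume : Measure ℝ), x ≠ 0 := by
    refine ae_iff.mpr ?_
    simpa using measure_singleton (0:ℝ)
  rcases le_or_gt s τ with hsτ | hsτ
  · rw [gammaMeasure, gammaMeasure, withDensity_apply _ measurableSet_Iic,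
      withDensity_apply _ measurableSet_Iic]
    refine lintegral_mono_ae ?_
    filter_upwards [ae_restrict_mem measurableSet_Iic, ae_restrict_of_ae h0ae] with x hx hx0
    rcases lt_or_gt_of_ne hx0 with hneg | hpos
    · rw [gammaPDF_of_neg hneg]; exact zero_le
    · exact ENNReal.ofReal_le_ofReal (hcmp1 x hpos (le_trans hx hsτ))
  · have hP : IsProbabilityMeasure (gammaMeasure a r) := isProbabilityMeasure_gammaMeasure ha hr
    have hP' : IsProbabilityMeasure (gammaMeasure a' r) := isProbabilityMeasure_gammaMeasure ha' hr
    have hIoi : gammaMeasure a r (Set.Ioi s) ≤ gammaMeasure a' r (Set.Ioi s) := by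
      rw [gammaMeasure, gammaMeasure, withDensity_apply _ measurableSet_Ioi,
        withDensity_apply _ measurableSet_Ioi]
      refine lintegral_mono_ae ?_
      filter_upwards [ae_restrict_mem measurableSet_Ioi] with x hx
      have hpos : τ ≤ x := (hsτ.trans hx).le
      exact ENNReal.ofReal_le_ofReal (hcmp2 x hpos)
    have e1 : gammaMeasure a' r (Set.Iic s) = 1 - gammaMeasure a' r (Set.Ioi s) := by
      rw [← Set.compl_Ioi, prob_compl_eq_one_sub measurableSet_Ioi]
    have e2 : gammaMeasure a r (Set.Iic s) = 1 - gammaMeasure a r (Set.Ioi s) := by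
      rw [← Set.compl_Ioi, prob_compl_eq_one_sub measurableSet_Ioi]
    rw [e1, e2]
    exact tsub_le_tsub_left hIoi 1

lemma my_countP_ofFn {K : ℕ} (x : Fin K → ℝ) (p : ℝ → Bool) :
    (List.ofFn x).countP p = ∑ k : Fin K, (if p (x k) then 1 else 0) := by
  induction K with
  | zero => simp
  | succ n ih =>
    rw [List.ofFn_succ, List.countP_cons, Fin.sum_univ_succ, ih]
    ring

lemma my_sorted_getElem_le {l : List ℝ} (hs : l.Pairwise (· ≤ ·)) {i j : ℕ}
    (hij : i ≤ j) (hj : j < l.length) : l[i]'(lt_of_le_of_lt hij hj) ≤ l[j] := by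
  rcases eq_or_lt_of_le hij with rfl | h
  · exact le_rfl
  · exact List.pairwise_iff_getElem.mp hs i j _ hj h

lemma my_sorted_count {l : List ℝ} (hs : l.Pairwise (· ≤ ·)) {a : ℝ} {j : ℕ}
    (hj : j < l.length) (h : l[j] ≤ a) :
    j + 1 ≤ l.countP (fun b => decide (b ≤ a)) := by
  have hsplit := List.take_append_drop (j+1) l
  have hcp : l.countP (fun b => decide (b ≤ a))
      = (l.take (j+1)).countP (fun b => decide (b ≤ a))
        + (l.drop (j+1)).countP (fun b => decide (b ≤ a)) := by
    conv_lhs => rw [← hsplit]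
    rw [List.countP_append]
  rw [hcp]
  have htake : (l.take (j+1)).countP (fun b => decide (b ≤ a)) = (l.take (j+1)).length := by
    refine List.countP_eq_length.mpr ?_
    intro b hb
    rw [List.mem_take_iff_getElem] at hb
    obtain ⟨i, hi, rfl⟩ := hb
    have hi' : i ≤ j := by omega
    simpa using le_trans (my_sorted_getElem_le hs hi' hj) h
  rw [htake, List.length_take]
  omega

lemma my_median_count {K : ℕ} (hK : 1 ≤ K) (x : Fin K → ℝ) (a : ℝ)
    (h : sampleMedian x ≤ a) :
    (K : ℝ) / 2 ≤ ∑ k : Fin K, (if x k ≤ a then (1:ℝ) else 0) := by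
  set l := List.insertionSort (· ≤ ·) (List.ofFn x) with hl
  have hlen : l.length = K := by
    rw [hl, List.length_insertionSort, List.length_ofFn]
  have hsort : l.Pairwise (· ≤ ·) := List.pairwise_insertionSort _ _
  have hperm : l.countP (fun b => decide (b ≤ a)) =
      (List.ofFn x).countP (fun b => decide (b ≤ a)) :=
    (List.perm_insertionSort _ _).countP_eq _
  have hsum : ((l.countP (fun b => decide (b ≤ a)) : ℕ) : ℝ)
      = ∑ k : Fin K, (if x k ≤ a then (1:ℝ) else 0) := by
    rw [hperm, my_countP_ofFn]
    push_cast
    refine Finset.sum_congr rfl fun k _ => ?_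
    by_cases hxk : x k ≤ a <;> simp [hxk]
  rw [← hsum]
  unfold sampleMedian at h
  by_cases hpar : K % 2 = 1
  · rw [if_pos hpar] at h
    have hjlt : K / 2 < l.length := by omega
    rw [List.getD_eq_getElem l 0 hjlt] at h
    have hcount := my_sorted_count hsort hjlt h
    have hcr : ((K/2 : ℕ) : ℝ) + 1 ≤ (l.countP (fun b => decide (b ≤ a)) : ℝ) := by
      exact_mod_cast hcount
    have hK2 : (K : ℝ) = 2 * ((K/2 : ℕ) : ℝ) + 1 := by
      exact_mod_cast (by omega : K = 2*(K/2)+1)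
    linarith
  · rw [if_neg hpar] at h
    have hKe : K % 2 = 0 := by omega
    have hjlt : K / 2 - 1 < l.length := by omega
    have hjlt2 : K / 2 < l.length := by omega
    rw [List.getD_eq_getElem l 0 hjlt, List.getD_eq_getElem l 0 hjlt2] at h
    have huv : l[K/2 - 1] ≤ l[K/2] := my_sorted_getElem_le hsort (by omega) hjlt2
    have hu : l[K/2 - 1] ≤ a := by linarith
    have hcount := my_sorted_count hsort hjlt hu
    have hc' : ((K/2 - 1 : ℕ) : ℝ) + 1 ≤ (l.countP (fun b => decide (b ≤ a)) : ℝ) := by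
      exact_mod_cast hcount
    have hK2 : (K : ℝ) = 2 * ((K/2 : ℕ) : ℝ) := by
      exact_mod_cast (by omega : K = 2*(K/2))
    have hsub : ((K/2 - 1 : ℕ) : ℝ) = ((K/2 : ℕ) : ℝ) - 1 := by
      have he : (K/2 - 1 : ℕ) + 1 = K/2 := by omega
      have := congrArg (fun n : ℕ => (n : ℝ)) he
      push_cast at this
      linarith
    linarith


/-- Let `(c k)_{k < K}` (`K = K_f ≥ 1`) be independent random variables with
`c k ~ (σ²/n_k)·χ²(n_k)`, `n₀ = min_k n_k`, `n_∞ = max_k n_k`, `β = n₀/n_∞`, and let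
`σ̂²_med` be the sample median of the `c k`.  For `0 ≤ t ≤ 1` with
`p⁻(t) = P(Γ_{n₀} ≤ n₀ − n₀ t) ≤ 1/2` (`Γ_{n₀} ~ χ²(n₀)`),
`P(σ̂²_med ≤ βσ² − σ²β t) ≤ exp((K/2)·ln(4 p⁻(t)(1 − p⁻(t))))`. -/
theorem stmt6
    {Ω : Type*} [MeasureSpace Ω] [IsProbabilityMeasure (ℙ : Measure Ω)]
    {K : ℕ} (hK : 1 ≤ K) {σ : ℝ} (hσ : 0 < σ)
    (nk : Fin K → ℕ) (hnk : ∀ k, 1 ≤ nk k)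
    (c : Fin K → Ω → ℝ) (hcmeas : ∀ k, Measurable (c k))
    (hlaw : ∀ k, Measure.map (c k) ℙ
      = Measure.map (fun x => σ ^ 2 / (nk k : ℝ) * x) (gammaMeasure ((nk k : ℝ) / 2) (1 / 2)))
    (hindep : iIndepFun c ℙ)
    (n0 ninf : ℕ) (hn0 : IsLeast (Set.range nk) n0) (hninf : IsGreatest (Set.range nk) ninf)
    (t : ℝ) (ht : 0 ≤ t) (ht1 : t ≤ 1)
    (p : ℝ)
    (hp : p = (gammaMeasure ((n0 : ℝ) / 2) (1 / 2)
        {x | x ≤ (n0 : ℝ) - (n0 : ℝ) * t}).toReal)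
    (hphalf : p ≤ 1 / 2) :
    ℙ {ω | sampleMedian (fun k => c k ω)
          ≤ ((n0 : ℝ) / (ninf : ℝ)) * σ ^ 2 - σ ^ 2 * ((n0 : ℝ) / (ninf : ℝ)) * t}
      ≤ ENNReal.ofReal (Real.exp ((K : ℝ) / 2 * Real.log (4 * p * (1 - p)))) := by
  classical
  obtain ⟨k0, hk0⟩ := hn0.1
  obtain ⟨kinf, hkinf⟩ := hninf.1
  have hn0pos : 1 ≤ n0 := hk0 ▸ hnk k0
  have hninfpos : 1 ≤ ninf := hkinf ▸ hnk kinf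
  have hn0r : (0:ℝ) < n0 := by exact_mod_cast hn0pos
  have hninfr : (0:ℝ) < ninf := by exact_mod_cast hninfpos
  have hσ2 : (0:ℝ) < σ ^ 2 := by positivity
  have h1t : (0:ℝ) ≤ 1 - t := by linarith
  set a : ℝ := ((n0 : ℝ) / (ninf : ℝ)) * σ ^ 2 - σ ^ 2 * ((n0 : ℝ) / (ninf : ℝ)) * t with ha_def
  have hppos : 0 ≤ p := hp ▸ ENNReal.toReal_nonneg
  rcases eq_or_lt_of_le hppos with hp0 | hp0
  · -- p = 0 : RHS is 1
    rw [← hp0]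
    have : (4:ℝ) * 0 * (1 - 0) = 0 := by ring
    rw [this, Real.log_zero, mul_zero, Real.exp_zero, ENNReal.ofReal_one]
    exact prob_le_one
  -- p > 0
  have hp1 : p < 1 := by linarith
  have h1p : 0 < 1 - p := by linarith
  -- the measurable events and indicators
  set A : Fin K → Set Ω := fun k => {ω | c k ω ≤ a} with hA_def
  have hA : ∀ k, MeasurableSet (A k) := fun k => measurableSet_le (hcmeas k) measurable_const
  set g : ℝ → ℝ := fun y => if y ≤ a then (1:ℝ) else 0 with hg_def
  have hgmeas : Measurable g := Measurable.ite measurableSet_Iic measurable_const measurable_const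
  set X : Fin K → Ω → ℝ := fun k => g ∘ c k with hX_def
  have hXmeas : ∀ k, Measurable (X k) := fun k => hgmeas.comp (hcmeas k)
  have hXindep : iIndepFun X ℙ :=
    hindep.comp (fun _ => g) (fun _ => hgmeas)
  -- probability of each event is at most p
  have hq : ∀ k, ℙ (A k) ≤ ENNReal.ofReal p := by
    intro k
    have hnkr : (0:ℝ) < nk k := by exact_mod_cast hnk k
    have hm : (0:ℝ) < σ ^ 2 / (nk k : ℝ) := by positivity
    have hnkle : (nk k : ℝ) ≤ (ninf : ℝ) := by exact_mod_cast hninf.2 ⟨k, rfl⟩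
    have hn0le : (n0 : ℝ) ≤ (nk k : ℝ) := by exact_mod_cast hn0.2 ⟨k, rfl⟩
    have hApre : A k = c k ⁻¹' Set.Iic a := rfl
    have h1 : ℙ (A k) = Measure.map (c k) ℙ (Set.Iic a) := by
      rw [hApre, Measure.map_apply (hcmeas k) measurableSet_Iic]
    rw [h1, hlaw k, Measure.map_apply (by fun_prop : Measurable fun x : ℝ => σ ^ 2 / (nk k : ℝ) * x) measurableSet_Iic]
    have hpre : (fun x => σ ^ 2 / (nk k : ℝ) * x) ⁻¹' Set.Iic a
        = Set.Iic (a / (σ ^ 2 / (nk k : ℝ))) := by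
      ext x
      simp only [Set.mem_preimage, Set.mem_Iic]
      rw [le_div_iff₀ hm, mul_comm]
    rw [hpre]
    have hfrac : (n0 : ℝ) / (ninf : ℝ) * (nk k : ℝ) ≤ (n0 : ℝ) := by
      rw [div_mul_eq_mul_div, div_le_iff₀ hninfr]
      nlinarith
    have hbound : a / (σ ^ 2 / (nk k : ℝ)) ≤ (n0 : ℝ) - (n0 : ℝ) * t := by
      rw [div_div_eq_mul_div, div_le_iff₀ hσ2, ha_def]
      nlinarith [mul_nonneg (mul_nonneg hσ2.le h1t) (sub_nonneg.mpr hfrac)]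
    calc gammaMeasure ((nk k : ℝ) / 2) (1/2) (Set.Iic (a / (σ ^ 2 / (nk k : ℝ))))
        ≤ gammaMeasure ((nk k : ℝ) / 2) (1/2) (Set.Iic ((n0:ℝ) - (n0:ℝ) * t)) :=
          measure_mono (Set.Iic_subset_Iic.mpr hbound)
      _ ≤ gammaMeasure ((n0 : ℝ) / 2) (1/2) (Set.Iic ((n0:ℝ) - (n0:ℝ) * t)) :=
          my_gamma_cdf_anti (by positivity) (by linarith) (by norm_num) _
      _ = ENNReal.ofReal p := by
          have hprob : IsProbabilityMeasure (gammaMeasure ((n0 : ℝ) / 2) (1/2)) :=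
            isProbabilityMeasure_gammaMeasure (by positivity) (by norm_num)
          have hset : {x : ℝ | x ≤ (n0:ℝ) - (n0:ℝ) * t} = Set.Iic ((n0:ℝ) - (n0:ℝ) * t) := rfl
          rw [hp, hset, ENNReal.ofReal_toReal (measure_ne_top _ _)]
  have hqr : ∀ k, (ℙ (A k)).toReal ≤ p := fun k =>
    ENNReal.toReal_le_of_le_ofReal hppos (hq k)
  -- Chernoff parameter
  set lam : ℝ := Real.log ((1 - p) / p) with hlam_def
  have hdivpos : 0 < (1 - p) / p := div_pos h1p hp0
  have hdiv1 : 1 ≤ (1 - p) / p := (one_le_div hp0).mpr (by linarith)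
  have hlam : 0 ≤ lam := Real.log_nonneg hdiv1
  have hexplam : Real.exp lam = (1 - p) / p := Real.exp_log hdivpos
  have he1 : 1 ≤ Real.exp lam := by rw [hexplam]; exact hdiv1
  -- mgf of each indicator
  have hmgf : ∀ k, mgf (X k) ℙ lam = (ℙ (A k)).toReal * (Real.exp lam - 1) + 1 := by
    intro k
    have hfun : (fun ω => Real.exp (lam * X k ω))
        = fun ω => (A k).indicator (fun _ => Real.exp lam - 1) ω + 1 := by
      funext ω
      by_cases hω : c k ω ≤ a
      · have hmem : ω ∈ A k := hω
        simp only [hX_def, hg_def, Function.comp_apply, if_pos hω, mul_one,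
          Set.indicator_of_mem hmem]
        ring
      · have hmem : ω ∉ A k := hω
        simp only [hX_def, hg_def, Function.comp_apply, if_neg hω, mul_zero, Real.exp_zero,
          Set.indicator_of_notMem hmem]
        ring
    rw [mgf, hfun, integral_add ((integrable_const _).indicator (hA k)) (integrable_const _),
      integral_indicator_const _ (hA k), integral_const]
    simp [smul_eq_mul, measureReal_def]
  have hmgf_le : ∀ k, mgf (X k) ℙ lam ≤ 2 * (1 - p) := by
    intro k
    rw [hmgf k]
    have h1 : (ℙ (A k)).toReal * (Real.exp lam - 1) ≤ p * (Real.exp lam - 1) :=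
      mul_le_mul_of_nonneg_right (hqr k) (by linarith)
    have h2 : p * (Real.exp lam - 1) = 1 - 2 * p := by
      rw [hexplam]; field_simp; ring
    linarith
  -- sum of indicators
  set S : Ω → ℝ := fun ω => ∑ k, X k ω with hS_def
  have hSsum : S = ∑ k, X k := by funext ω; rw [hS_def]; simp
  have hSmeas : Measurable S := by
    rw [hS_def]; exact Finset.measurable_sum _ fun k _ => hXmeas k
  have hXbd : ∀ k ω, X k ω ≤ 1 := by
    intro k ω
    simp only [hX_def, hg_def, Function.comp_apply]
    split <;> norm_num
  have hXnn : ∀ k ω, 0 ≤ X k ω := by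
    intro k ω
    simp only [hX_def, hg_def, Function.comp_apply]
    split <;> norm_num
  have hSbd : ∀ ω, S ω ≤ K := by
    intro ω
    rw [hS_def]
    calc ∑ k, X k ω ≤ ∑ (k : Fin K), (1:ℝ) := Finset.sum_le_sum fun k _ => hXbd k ω
      _ = K := by simp
  have hint : Integrable (fun ω => Real.exp (lam * S ω)) ℙ := by
    refine Integrable.mono' (integrable_const (Real.exp (lam * K)))
      ((hSmeas.const_mul lam).exp.aestronglyMeasurable) ?_
    filter_upwards with ω
    rw [Real.norm_eq_abs, abs_of_pos (Real.exp_pos _)]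
    exact Real.exp_le_exp.mpr (mul_le_mul_of_nonneg_left (hSbd ω) hlam)
  -- Chernoff bound
  have hcher := measure_ge_le_exp_mul_mgf (μ := ℙ) (X := S) ((K:ℝ)/2) hlam hint
  have hmgfS : mgf S ℙ lam ≤ (2 * (1 - p)) ^ K := by
    rw [hSsum, hXindep.mgf_sum hXmeas]
    calc ∏ k, mgf (X k) ℙ lam ≤ ∏ (k : Fin K), (2 * (1 - p)) :=
          Finset.prod_le_prod (fun k _ => mgf_nonneg) (fun k _ => hmgf_le k)
      _ = (2 * (1 - p)) ^ K := by simp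
  -- final identity
  have hfinal : Real.exp (-lam * ((K:ℝ)/2)) * (2 * (1 - p)) ^ K
      = Real.exp ((K : ℝ) / 2 * Real.log (4 * p * (1 - p))) := by
    have h2p : (0:ℝ) < 2 * (1 - p) := by linarith
    have hpow : (2 * (1 - p)) ^ K = Real.exp ((K:ℝ) * Real.log (2 * (1 - p))) := by
      rw [Real.exp_nat_mul, Real.exp_log h2p]
    rw [hpow, ← Real.exp_add]
    congr 1
    have e1 : Real.log ((1 - p) / p) = Real.log (1 - p) - Real.log p :=
      Real.log_div h1p.ne' hp0.ne'
    have e2 : Real.log (2 * (1 - p)) = Real.log 2 + Real.log (1 - p) :=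
      Real.log_mul two_ne_zero h1p.ne'
    have e3 : Real.log (4 * p * (1 - p))
        = 2 * Real.log 2 + Real.log p + Real.log (1 - p) := by
      rw [Real.log_mul (by positivity) h1p.ne', Real.log_mul (by norm_num) hp0.ne',
        show (4:ℝ) = 2 ^ 2 by norm_num, Real.log_pow]
      push_cast
      ring
    rw [hlam_def, e1, e2, e3]
    ring
  -- assemble
  have hsubset : {ω | sampleMedian (fun k => c k ω) ≤ a} ⊆ {ω | (K:ℝ)/2 ≤ S ω} := by
    intro ω hω
    have := my_median_count hK (fun k => c k ω) a hω
    simp only [Set.mem_setOf_eq, hS_def]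
    refine le_trans this (le_of_eq ?_)
    refine Finset.sum_congr rfl fun k _ => ?_
    simp [hX_def, hg_def]
  refine le_trans (measure_mono hsubset) ?_
  rw [ENNReal.le_ofReal_iff_toReal_le (measure_ne_top _ _) (Real.exp_pos _).le]
  calc (ℙ {ω | (K:ℝ)/2 ≤ S ω}).toReal
      ≤ Real.exp (-lam * ((K:ℝ)/2)) * mgf S ℙ lam := hcher
    _ ≤ Real.exp (-lam * ((K:ℝ)/2)) * (2 * (1 - p)) ^ K :=
        mul_le_mul_of_nonneg_left hmgfS (Real.exp_pos _).le
    _ = Real.exp ((K : ℝ) / 2 * Real.log (4 * p * (1 - p))) := hfinal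
end

section
/- Let Z follow the binomial distribution B(n, p) with n ≥ 1 and 0 < p ≤ 1/2. Then P( Z ≥ ⌈n/2⌉ ) ≤ exp( (n/2) · ln( 4p(1 − p) ) ). -/
open MeasureTheory ProbabilityTheory Real
open scoped ENNReal

/-- Let `Z` follow the binomial distribution `B(n, p)` with `n ≥ 1` and
`0 < p ≤ 1/2`, i.e. `P(Z = m) = C(n,m) pᵐ (1−p)^{n−m}` for every `m`.  Then
`P(Z ≥ ⌈n/2⌉) ≤ exp((n/2)·ln(4p(1−p)))`. -/
theorem stmt7
    {Ω : Type*} [MeasureSpace Ω] [IsProbabilityMeasure (ℙ : Measure Ω)]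
    {n : ℕ} (hn : 1 ≤ n) {p : ℝ} (hp0 : 0 < p) (hp : p ≤ 1 / 2)
    (Z : Ω → ℕ) (hZmeas : Measurable Z)
    (hZ : ∀ m : ℕ, ℙ {ω | Z ω = m}
      = ENNReal.ofReal ((n.choose m : ℝ) * p ^ m * (1 - p) ^ (n - m))) :
    ℙ {ω | ⌈(n : ℝ) / 2⌉₊ ≤ Z ω}
      ≤ ENNReal.ofReal (Real.exp ((n : ℝ) / 2 * Real.log (4 * p * (1 - p)))) := by
  set k := ⌈(n : ℝ) / 2⌉₊ with hk
  have hq0 : (0:ℝ) < 1 - p := by linarith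
  have h4 : (0:ℝ) < 4 * p * (1 - p) := by positivity
  -- the tail beyond n has measure zero
  have htail : ℙ {ω | n + 1 ≤ Z ω} = 0 := by
    have hsub : {ω | n + 1 ≤ Z ω} ⊆ ⋃ j : ℕ, {ω | Z ω = j + (n + 1)} := by
      intro ω hω
      simp only [Set.mem_iUnion, Set.mem_setOf_eq]
      simp only [Set.mem_setOf_eq] at hω
      exact ⟨Z ω - (n + 1), by omega⟩
    refine le_antisymm ?_ zero_le
    calc ℙ {ω | n + 1 ≤ Z ω} ≤ ∑' j : ℕ, ℙ {ω | Z ω = j + (n + 1)} :=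
          (measure_mono hsub).trans (measure_iUnion_le _)
      _ = 0 := by
          simp only [hZ]
          convert tsum_zero with j
          rw [Nat.choose_eq_zero_of_lt (by omega)]
          simp
  -- per-term bound
  have key : ∀ m ∈ Finset.Icc k n, (n.choose m : ℝ) * p ^ m * (1 - p) ^ (n - m)
      ≤ (n.choose m : ℝ) * (p * (1 - p)) ^ ((n : ℝ) / 2) := by
    intro m hm
    rw [Finset.mem_Icc] at hm
    obtain ⟨hkm, hmn⟩ := hm
    have hm2 : (n : ℝ) / 2 ≤ (m : ℝ) :=
      le_trans (Nat.le_ceil _) (by exact_mod_cast hkm)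
    have hratio0 : (0:ℝ) < p / (1 - p) := by positivity
    have hratio : p / (1 - p) ≤ 1 := (div_le_one hq0).2 (by linarith)
    have h1 : (p / (1 - p)) ^ (m : ℝ) ≤ (p / (1 - p)) ^ ((n : ℝ) / 2) :=
      Real.rpow_le_rpow_of_exponent_ge hratio0 hratio hm2
    have e1 : p ^ m * (1 - p) ^ (n - m) = (1 - p) ^ n * (p / (1 - p)) ^ (m : ℝ) := by
      rw [Real.rpow_natCast, div_pow]
      have hpow : (1 - p) ^ n = (1 - p) ^ (n - m) * (1 - p) ^ m := by
        rw [← pow_add]; congr 1; omega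
      rw [hpow]
      field_simp
    have e2 : (p * (1 - p)) ^ ((n : ℝ) / 2) = (1 - p) ^ n * (p / (1 - p)) ^ ((n : ℝ) / 2) := by
      have hsq : p * (1 - p) = (1 - p) ^ 2 * (p / (1 - p)) := by
        field_simp
      rw [hsq, Real.mul_rpow (by positivity) hratio0.le]
      congr 1
      rw [← Real.rpow_natCast (1 - p) 2, ← Real.rpow_mul hq0.le, ← Real.rpow_natCast (1 - p) n]
      congr 1
      push_cast
      ring
    rw [mul_assoc, e1, e2]
    have hc : (0:ℝ) ≤ (n.choose m : ℝ) := by positivity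
    have hqn : (0:ℝ) ≤ (1 - p) ^ n := by positivity
    exact mul_le_mul_of_nonneg_left (mul_le_mul_of_nonneg_left h1 hqn) hc
  -- sum bound
  have hsum : ∑ m ∈ Finset.Icc k n, (n.choose m : ℝ) * p ^ m * (1 - p) ^ (n - m)
      ≤ Real.exp ((n : ℝ) / 2 * Real.log (4 * p * (1 - p))) := by
    have hexp : Real.exp ((n : ℝ) / 2 * Real.log (4 * p * (1 - p)))
        = (4 * p * (1 - p)) ^ ((n : ℝ) / 2) := by
      rw [Real.rpow_def_of_pos h4, mul_comm]
    have h24 : ((2:ℝ) ^ n) = (4:ℝ) ^ ((n : ℝ) / 2) := by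
      rw [show (4:ℝ) = (2:ℝ)^(2:ℕ) by norm_num, ← Real.rpow_natCast (2:ℝ) 2,
        ← Real.rpow_mul (by norm_num), ← Real.rpow_natCast (2:ℝ) n]
      congr 1
      push_cast
      ring
    have h2n : ((2:ℝ) ^ n) * (p * (1 - p)) ^ ((n : ℝ) / 2)
        = (4 * p * (1 - p)) ^ ((n : ℝ) / 2) := by
      have h4e : (4 : ℝ) * p * (1 - p) = 4 * (p * (1 - p)) := by ring
      rw [h4e, h24, ← Real.mul_rpow (by norm_num) (mul_nonneg hp0.le hq0.le)]
    calc ∑ m ∈ Finset.Icc k n, (n.choose m : ℝ) * p ^ m * (1 - p) ^ (n - m)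
        ≤ ∑ m ∈ Finset.Icc k n, (n.choose m : ℝ) * (p * (1 - p)) ^ ((n : ℝ) / 2) :=
          Finset.sum_le_sum key
      _ = (∑ m ∈ Finset.Icc k n, (n.choose m : ℝ)) * (p * (1 - p)) ^ ((n : ℝ) / 2) := by
          rw [Finset.sum_mul]
      _ ≤ ((2:ℝ) ^ n) * (p * (1 - p)) ^ ((n : ℝ) / 2) := by
          apply mul_le_mul_of_nonneg_right _ (by positivity)
          have : ∑ m ∈ Finset.Icc k n, n.choose m ≤ ∑ m ∈ Finset.range (n + 1), n.choose m := by
            apply Finset.sum_le_sum_of_subset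
            intro m hm
            rw [Finset.mem_Icc] at hm
            rw [Finset.mem_range]
            omega
          rw [Nat.sum_range_choose] at this
          calc (∑ m ∈ Finset.Icc k n, (n.choose m : ℝ))
              = ((∑ m ∈ Finset.Icc k n, n.choose m : ℕ) : ℝ) := by push_cast; ring
            _ ≤ ((2^n : ℕ) : ℝ) := by exact_mod_cast this
            _ = (2:ℝ)^n := by push_cast; ring
      _ = Real.exp ((n : ℝ) / 2 * Real.log (4 * p * (1 - p))) := by rw [hexp, h2n]
  -- put it together
  have hsplit : {ω | k ≤ Z ω} ⊆ (⋃ m ∈ Finset.Icc k n, {ω | Z ω = m}) ∪ {ω | n + 1 ≤ Z ω} := by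
    intro ω hω
    by_cases h : Z ω ≤ n
    · left
      simp only [Set.mem_iUnion, Set.mem_setOf_eq]
      exact ⟨Z ω, by rw [Finset.mem_Icc]; exact ⟨hω, h⟩, rfl⟩
    · right
      simp only [Set.mem_setOf_eq]
      omega
  calc ℙ {ω | k ≤ Z ω}
      ≤ ℙ (⋃ m ∈ Finset.Icc k n, {ω | Z ω = m}) + ℙ {ω | n + 1 ≤ Z ω} :=
        (measure_mono hsplit).trans (measure_union_le _ _)
    _ = ℙ (⋃ m ∈ Finset.Icc k n, {ω | Z ω = m}) := by rw [htail, add_zero]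
    _ ≤ ∑ m ∈ Finset.Icc k n, ℙ {ω | Z ω = m} := measure_biUnion_finset_le _ _
    _ = ENNReal.ofReal (∑ m ∈ Finset.Icc k n, (n.choose m : ℝ) * p ^ m * (1 - p) ^ (n - m)) := by
        simp only [hZ]
        rw [← ENNReal.ofReal_sum_of_nonneg]
        intro m _
        positivity
    _ ≤ ENNReal.ofReal (Real.exp ((n : ℝ) / 2 * Real.log (4 * p * (1 - p)))) :=
        ENNReal.ofReal_le_ofReal hsum
end
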